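/- Let X and Y be metrizable topological spaces, D_X ⊆ X and D_Y ⊆ Y closed discrete subsets, and φ : Y → X an injection such that φ[Y \ D_Y] = D_X and φ[Y] is dense in X. Then the space ⟨X, σ(τ_X, τ_Y, φ)⟩ is submetrizable, i.e., there exists a metrizable topology τ on the set X with τ ⊆ σ(τ_X, τ_Y, φ). -/

import Mathlib

open Set Topology

open Metric



theorem exists_good_dist {α : Type*} [MetricSpace α] {S : Set α}
    (hcl : IsClosed S)
    (hds : ∀ a ∈ S, ∃ ε, 0 < ε ∧ ∀ b ∈ S, b ≠ a → ε ≤ dist a b) :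
    ∃ dd : α → α → ℝ,
      (∀ u v, dist u v ≤ dd u v) ∧
      (∀ u, dd u u = 0) ∧
      (∀ u v, dd u v = dd v u) ∧
      (∀ u v w, dd u w ≤ dd u v + dd v w) ∧
      (∀ u v, u ∈ S → v ∈ S → u ≠ v → 1 ≤ dd u v) ∧
      (∀ z, ∃ δ, 0 < δ ∧ ∃ C, 0 ≤ C ∧ ∀ w, dist z w < δ → dd z w ≤ C * dist z w) := by
  classical
  -- choose isolation radii
  have hr : ∀ a : S, ∃ r : ℝ, 0 < r ∧ r ≤ 1 ∧ ∀ b ∈ S, b ≠ (a : α) → r ≤ dist (a : α) b := by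
    rintro ⟨a, ha⟩
    obtain ⟨ε, hε, hsep⟩ := hds a ha
    exact ⟨min ε 1, by positivity, min_le_right _ _,
      fun b hb hba => le_trans (min_le_left _ _) (hsep b hb hba)⟩
  choose r hr0 hr1 hrsep using hr
  -- bump functions
  set bump : S → α → ℝ := fun a z => max (1 - 3 * dist z (a : α) / r a) 0 with hbump
  have bump_nonneg : ∀ a z, 0 ≤ bump a z := fun a z => le_max_right _ _
  have bump_le_one : ∀ a z, bump a z ≤ 1 := by
    intro a z
    apply max_le _ (by norm_num)
    have : 0 ≤ 3 * dist z (a : α) / r a :=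
      div_nonneg (by positivity) (hr0 a).le
    linarith
  have bump_self : ∀ a : S, bump a (a : α) = 1 := by
    intro a
    simp [hbump, dist_self]
  have bump_zero : ∀ (a : S) (z : α), r a / 3 ≤ dist z (a : α) → bump a z = 0 := by
    intro a z h
    have h3 : r a ≤ 3 * dist z (a : α) := by linarith
    have h1 : (1 : ℝ) ≤ 3 * dist z (a : α) / r a :=
      (one_le_div (hr0 a)).2 h3
    simp only [hbump]
    apply max_eq_right
    linarith
  have bump_lip : ∀ (a : S) (u v : α),
      |bump a u - bump a v| ≤ 3 / r a * dist u v := by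
    intro a u v
    have h1 : |bump a u - bump a v| ≤
        |(1 - 3 * dist u (a : α) / r a) - (1 - 3 * dist v (a : α) / r a)| :=
      abs_max_sub_max_le_abs _ _ _
    have h2 : (1 - 3 * dist u (a : α) / r a) - (1 - 3 * dist v (a : α) / r a)
        = 3 / r a * (dist v (a : α) - dist u (a : α)) := by ring
    calc |bump a u - bump a v|
        ≤ |(1 - 3 * dist u (a : α) / r a) - (1 - 3 * dist v (a : α) / r a)| := h1
      _ = 3 / r a * |dist v (a : α) - dist u (a : α)| := by
          rw [h2, abs_mul, abs_of_nonneg (div_nonneg (by norm_num) (hr0 a).le)]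
      _ ≤ 3 / r a * dist v u :=
          mul_le_mul_of_nonneg_left (abs_dist_sub_le v u (a : α))
            (div_nonneg (by norm_num) (hr0 a).le)
      _ = 3 / r a * dist u v := by rw [dist_comm]
  -- the sup pseudometric
  set pp : α → α → ℝ := fun u v => ⨆ a : S, |bump a u - bump a v| with hpp
  have bdd : ∀ u v : α, BddAbove (Set.range fun a : S => |bump a u - bump a v|) := by
    intro u v
    refine ⟨1, ?_⟩
    rintro x ⟨a, rfl⟩
    rw [abs_sub_le_iff]
    constructor <;> nlinarith [bump_nonneg a u, bump_nonneg a v, bump_le_one a u, bump_le_one a v]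
  have pp_nonneg : ∀ u v, 0 ≤ pp u v := fun u v =>
    Real.iSup_nonneg fun a => abs_nonneg _
  have pp_self : ∀ u, pp u u = 0 := by
    intro u
    apply le_antisymm
    · exact Real.iSup_le (fun a => by simp) le_rfl
    · exact pp_nonneg u u
  have pp_comm : ∀ u v, pp u v = pp v u := by
    intro u v
    simp only [hpp]
    congr 1
    ext a
    rw [abs_sub_comm]
  have pp_tri : ∀ u v w, pp u w ≤ pp u v + pp v w := by
    intro u v w
    apply Real.iSup_le _ (add_nonneg (pp_nonneg u v) (pp_nonneg v w))
    intro a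
    calc |bump a u - bump a w| ≤ |bump a u - bump a v| + |bump a v - bump a w| :=
          abs_sub_le _ _ _
      _ ≤ pp u v + pp v w :=
          add_le_add (le_ciSup (bdd u v) a) (le_ciSup (bdd v w) a)
  have pp_sep : ∀ u v, u ∈ S → v ∈ S → u ≠ v → 1 ≤ pp u v := by
    intro u v hu hv huv
    have h0 : bump ⟨u, hu⟩ v = 0 := by
      apply bump_zero
      have := hrsep ⟨u, hu⟩ v hv (by simpa [eq_comm] using huv)
      have h3 : r ⟨u, hu⟩ / 3 ≤ r ⟨u, hu⟩ := by
        have := hr0 ⟨u, hu⟩; linarith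
      calc r ⟨u, hu⟩ / 3 ≤ r ⟨u, hu⟩ := h3
        _ ≤ dist (u : α) v := this
        _ = dist v u := dist_comm _ _
    have h1 : |bump ⟨u, hu⟩ u - bump ⟨u, hu⟩ v| = 1 := by
      rw [bump_self ⟨u, hu⟩, h0]; norm_num
    calc (1 : ℝ) = |bump ⟨u, hu⟩ u - bump ⟨u, hu⟩ v| := h1.symm
      _ ≤ pp u v := le_ciSup (bdd u v) ⟨u, hu⟩

  -- discreteness of the bubble family
  have disc : ∀ z : α, ∃ δ, 0 < δ ∧ ∀ a b : S,
      (∃ u, dist z u < δ ∧ dist u (a : α) < r a / 3) →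
      (∃ u, dist z u < δ ∧ dist u (b : α) < r b / 3) → a = b := by
    intro z
    by_cases hz : z ∈ S
    · set a₀ : S := ⟨z, hz⟩ with ha₀
      refine ⟨r a₀ / 3, by have := hr0 a₀; linarith, ?_⟩
      have key : ∀ a : S, (∃ u, dist z u < r a₀ / 3 ∧ dist u (a : α) < r a / 3) → a = a₀ := by
        rintro a ⟨u, hu1, hu2⟩
        by_contra hne
        have hcne : (a : α) ≠ z := fun h => hne (Subtype.ext h)
        have h1 : r a ≤ dist (a : α) z := hrsep a z hz (Ne.symm hcne)
        have h2 : r a₀ ≤ dist z (a : α) := hrsep a₀ (a : α) a.2 hcne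
        have h3 : dist (a : α) z ≤ dist (a : α) u + dist u z := dist_triangle _ _ _
        have h4 : dist (a : α) u = dist u (a : α) := dist_comm _ _
        have h5 : dist u z = dist z u := dist_comm _ _
        have h6 : dist z (a : α) = dist (a : α) z := dist_comm _ _
        have hpos : 0 < dist (a : α) z := dist_pos.2 hcne
        linarith
      intro a b hA hB
      rw [key a hA, key b hB]
    · have hop : IsOpen Sᶜ := hcl.isOpen_compl
      obtain ⟨t, ht, hball⟩ := Metric.isOpen_iff.1 hop z hz
      have hsep2 : ∀ b ∈ S, t ≤ dist z b := by
        intro b hb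
        by_contra h
        push_neg at h
        have : b ∈ Sᶜ := hball (by rwa [mem_ball, dist_comm])
        exact this hb
      refine ⟨t / 4, by linarith, ?_⟩
      have hr_big : ∀ a : S, (∃ u, dist z u < t / 4 ∧ dist u (a : α) < r a / 3) →
          9 / 4 * t < r a ∧ dist z (a : α) < t / 4 + r a / 3 := by
        rintro a ⟨u, hu1, hu2⟩
        have h1 : dist z (a : α) ≤ dist z u + dist u (a : α) := dist_triangle _ _ _
        have h2 : t ≤ dist z (a : α) := hsep2 _ a.2
        constructor <;> linarith
      intro a b hA hB
      by_contra hne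
      have hcne : (a : α) ≠ (b : α) := fun h => hne (Subtype.ext h)
      obtain ⟨hA1, hA2⟩ := hr_big a hA
      obtain ⟨hB1, hB2⟩ := hr_big b hB
      have h1 : r a ≤ dist (a : α) b := hrsep a b b.2 (Ne.symm hcne)
      have h2 : dist (a : α) (b : α) ≤ dist (a : α) z + dist z (b : α) := dist_triangle _ _ _
      have h3 : dist (a : α) z = dist z (a : α) := dist_comm _ _
      have h4 : r b ≤ dist (b : α) a := hrsep b a a.2 hcne
      have h5 : dist (b : α) (a : α) = dist (a : α) (b : α) := dist_comm _ _
      linarith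
  -- local control of pp
  have pp_local : ∀ z, ∃ δ, 0 < δ ∧ ∃ C, 0 ≤ C ∧
      ∀ w, dist z w < δ → pp z w ≤ C * dist z w := by
    intro z
    obtain ⟨δ, hδ, huniq⟩ := disc z
    by_cases hact : ∃ a : S, ∃ u, dist z u < δ ∧ dist u (a : α) < r a / 3
    · obtain ⟨a₀, hu₀⟩ := hact
      refine ⟨δ, hδ, 3 / r a₀, div_nonneg (by norm_num) (hr0 a₀).le, ?_⟩
      intro w hw
      apply Real.iSup_le _ (mul_nonneg (div_nonneg (by norm_num) (hr0 a₀).le) dist_nonneg)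
      intro a
      by_cases ha : a = a₀
      · subst ha; exact bump_lip a z w
      · have hz0 : bump a z = 0 := by
          by_contra h
          have hd : dist z (a : α) < r a / 3 := by
            by_contra h2
            push_neg at h2
            exact h (bump_zero a z h2)
          exact ha (huniq a a₀ ⟨z, by simpa using hδ, hd⟩ hu₀)
        have hw0 : bump a w = 0 := by
          by_contra h
          have hd : dist w (a : α) < r a / 3 := by
            by_contra h2
            push_neg at h2
            exact h (bump_zero a w h2)
          exact ha (huniq a a₀ ⟨w, hw, hd⟩ hu₀)
        rw [hz0, hw0]
        simpa using mul_nonneg (div_nonneg (by norm_num : (0:ℝ) ≤ 3) (hr0 a₀).le) dist_nonneg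
    · refine ⟨δ, hδ, 0, le_rfl, ?_⟩
      intro w hw
      rw [zero_mul]
      apply Real.iSup_le _ le_rfl
      intro a
      have hz0 : bump a z = 0 := by
        by_contra h
        have hd : dist z (a : α) < r a / 3 := by
          by_contra h2
          push_neg at h2
          exact h (bump_zero a z h2)
        exact hact ⟨a, z, by simpa using hδ, hd⟩
      have hw0 : bump a w = 0 := by
        by_contra h
        have hd : dist w (a : α) < r a / 3 := by
          by_contra h2
          push_neg at h2
          exact h (bump_zero a w h2)
        exact hact ⟨a, w, hw, hd⟩
      rw [hz0, hw0]
      simp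
  -- assemble
  refine ⟨fun u v => dist u v + pp u v, ?_, ?_, ?_, ?_, ?_, ?_⟩
  · intro u v
    dsimp only
    have := pp_nonneg u v
    linarith
  · intro u
    dsimp only
    rw [dist_self, pp_self, add_zero]
  · intro u v
    dsimp only
    rw [dist_comm, pp_comm]
  · intro u v w
    dsimp only
    have h1 := dist_triangle u v w
    have h2 := pp_tri u v w
    linarith
  · intro u v hu hv huv
    dsimp only
    have h1 := pp_sep u v hu hv huv
    have h2 : (0:ℝ) ≤ dist u v := dist_nonneg
    linarith
  · intro z
    obtain ⟨δ, hδ, C, hC, hloc⟩ := pp_local z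
    refine ⟨δ, hδ, C + 1, by linarith, ?_⟩
    intro w hw
    dsimp only
    have := hloc w hw
    have h2 : (0:ℝ) ≤ dist z w := dist_nonneg
    nlinarith


section helpers

theorem closed_sep {α : Type*} [MetricSpace α] {S : Set α} (hcl : IsClosed S) :
    ∀ z : α, z ∉ S → ∃ ε, 0 < ε ∧ ∀ b ∈ S, ε ≤ dist z b := by
  intro z hz
  obtain ⟨ε, hε, hball⟩ := Metric.isOpen_iff.1 hcl.isOpen_compl z hz
  refine ⟨ε, hε, fun b hb => ?_⟩
  by_contra h
  push_neg at h
  exact (hball (by rwa [Metric.mem_ball, dist_comm])) hb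

theorem discrete_sep {α : Type*} [MetricSpace α] {S : Set α}
    (hd : DiscreteTopology S) :
    ∀ a ∈ S, ∃ ε, 0 < ε ∧ ∀ b ∈ S, b ≠ a → ε ≤ dist a b := by
  intro a ha
  have h1 : 𝓝[≠] (a : α) ⊓ Filter.principal S = ⊥ :=
    discreteTopology_subtype_iff.1 hd a ha
  have h2 : Sᶜ ∈ 𝓝[≠] (a : α) := by rwa [Filter.inf_principal_eq_bot] at h1
  obtain ⟨ε, hε, hball⟩ := Metric.mem_nhdsWithin_iff.1 h2
  refine ⟨ε, hε, fun b hb hba => ?_⟩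
  by_contra h
  push_neg at h
  have hmem : b ∈ Metric.ball a ε ∩ {a}ᶜ := ⟨by rwa [Metric.mem_ball, dist_comm], hba⟩
  exact (hball hmem) hb

end helpers
/-- Chains (walks) from `x`, made of `dd`-steps and of `rr`-steps through `φ`. -/
inductive SigReach {X Y : Type*} (φ : Y → X) (dd : X → X → ℝ) (rr : Y → Y → ℝ) (x : X) :
    X → ℝ → Prop
  | refl : SigReach φ dd rr x x 0
  | stepd : ∀ {z t} (v : X), SigReach φ dd rr x z t → SigReach φ dd rr x v (t + dd z v)
  | stepr : ∀ {t} (q q' : Y), SigReach φ dd rr x (φ q) t →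
      SigReach φ dd rr x (φ q') (t + rr q q')

/-- Anchors: points of `Y` that can legitimately serve as origins of ρ-runs. -/
inductive SigAnc {X Y : Type*} (φ : Y → X) (dd : X → X → ℝ) (rr : Y → Y → ℝ) (DY : Set Y)
    (x : X) : Y → ℝ → Prop
  | base : ∀ {ω t}, φ ω = x → 0 ≤ t → SigAnc φ dd rr DY x ω t
  | stepX : ∀ {ω t}, dd x (φ ω) ≤ t → ω ∈ DY → SigAnc φ dd rr DY x ω t
  | step : ∀ {ω' o ω t}, SigAnc φ dd rr DY x ω' t → rr ω' o ≤ t → o ∉ DY →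
      dd (φ o) (φ ω) ≤ t → ω ∈ DY → SigAnc φ dd rr DY x ω t

namespace SigAnc

theorem mono {X Y : Type*} {φ : Y → X} {dd : X → X → ℝ} {rr : Y → Y → ℝ} {DY : Set Y}
    {x : X} {ω : Y} {t : ℝ} (h : SigAnc φ dd rr DY x ω t) :
    ∀ s, t ≤ s → SigAnc φ dd rr DY x ω s := by
  induction h with
  | base h1 h2 => exact fun s hs => .base h1 (h2.trans hs)
  | stepX h1 h2 => exact fun s hs => .stepX (h1.trans hs) h2
  | step h1 h2 h3 h4 h5 ih => exact fun s hs => .step (ih s hs) (h2.trans hs) h3 (h4.trans hs) h5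

end SigAnc

namespace SigReach

variable {X Y : Type*} {φ : Y → X} {dd : X → X → ℝ} {rr : Y → Y → ℝ}

theorem nonneg (hdd0 : ∀ u v, 0 ≤ dd u v) (hrr0 : ∀ q q', 0 ≤ rr q q')
    {x z : X} {t : ℝ} (h : SigReach φ dd rr x z t) : 0 ≤ t := by
  induction h with
  | refl => exact le_refl _
  | stepd v h ih => exact add_nonneg ih (hdd0 _ _)
  | stepr q q' h ih => exact add_nonneg ih (hrr0 _ _)

theorem append {x z w : X} {s s' : ℝ} (h1 : SigReach φ dd rr x z s)
    (h2 : SigReach φ dd rr z w s') : SigReach φ dd rr x w (s + s') := by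
  induction h2 with
  | refl => simpa using h1
  | stepd v h ih =>
      have := SigReach.stepd v ih
      rwa [add_assoc] at this
  | stepr q q' h ih =>
      have := SigReach.stepr q q' ih
      rwa [add_assoc] at this

theorem symm (hddc : ∀ u v, dd u v = dd v u) (hrrc : ∀ q q', rr q q' = rr q' q)
    {x z : X} {t : ℝ} (h : SigReach φ dd rr x z t) : SigReach φ dd rr z x t := by
  induction h with
  | refl => exact .refl
  | @stepd z' t' v h ih =>
      have h1 : SigReach φ dd rr v z' (0 + dd v z') :=
        SigReach.stepd z' SigReach.refl
      have h2 := h1.append ih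
      have h3 : (0 + dd v z') + t' = t' + dd z' v := by rw [zero_add, hddc]; ring
      rwa [h3] at h2
  | @stepr t' q q' h ih =>
      have h1 : SigReach φ dd rr (φ q') (φ q) (0 + rr q' q) :=
        SigReach.stepr q' q SigReach.refl
      have h2 := h1.append ih
      have h3 : (0 + rr q' q) + t' = t' + rr q q' := by rw [zero_add, hrrc]; ring
      rwa [h3] at h2

end SigReach

/-- The key lower bound: short chains cannot connect `x` to `x'`. -/
theorem sigReach_lower {X Y : Type*} (φ : Y → X) (dd : X → X → ℝ) (rr : Y → Y → ℝ)
    (DY : Set Y)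
    (hinj : Function.Injective φ)
    (hdd0 : ∀ u v, 0 ≤ dd u v)
    (hddself : ∀ u, dd u u = 0)
    (hddtri : ∀ u v w, dd u w ≤ dd u v + dd v w)
    (hrr0 : ∀ q q', 0 ≤ rr q q')
    (hrrtri : ∀ a b c, rr a c ≤ rr a b + rr b c)
    (sepX : ∀ o o', o ∉ DY → o' ∉ DY → dd (φ o) (φ o') < 1 → o = o')
    (sepY : ∀ w w', w ∈ DY → w' ∈ DY → rr w w' < 1 → w = w')
    (x x' : X) (ε : ℝ) (hε1 : ε ≤ 1)
    (A1 : ε ≤ dd x x')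
    (A2 : ∀ o, o ∉ DY → φ o ≠ x → ε ≤ dd x (φ o))
    (A3 : ∀ o, o ∉ DY → φ o ≠ x' → ε ≤ dd (φ o) x')
    (A4 : ∀ q w, φ q = x → w ∈ DY → w ≠ q → ε ≤ rr q w)
    (A5 : ∀ q w, φ q = x' → w ∈ DY → w ≠ q → ε ≤ rr w q)
    (A6 : ∀ q q', φ q = x → φ q' = x' → ε ≤ rr q q') :
    ∀ t, SigReach φ dd rr x x' t → ε ≤ t := by
  intro T hT
  by_contra hcon
  push_neg at hcon
  -- the invariant
  have main : ∀ z t, SigReach φ dd rr x z t → t < ε →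
      (dd x z ≤ t ∨ ∃ ω o, SigAnc φ dd rr DY x ω t ∧ o ∉ DY ∧ rr ω o ≤ t ∧ dd (φ o) z ≤ t) := by
    intro z t h
    induction h with
    | refl =>
        intro _
        exact Or.inl (by rw [hddself])
    | @stepd z' t' v h ih =>
        intro hlt
        have ht'le : t' ≤ t' + dd z' v := by have := hdd0 z' v; linarith
        have hlt' : t' < ε := lt_of_le_of_lt ht'le hlt
        rcases ih hlt' with hα | ⟨ω, o, hAnc, ho, hro, hdo⟩
        · exact Or.inl (le_trans (hddtri x z' v) (by linarith))
        · exact Or.inr ⟨ω, o, hAnc.mono _ ht'le, ho, le_trans hro ht'le,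
            le_trans (hddtri (φ o) z' v) (by linarith)⟩
    | @stepr t' q q' h ih =>
        intro hlt
        have hc0 : 0 ≤ rr q q' := hrr0 q q'
        have ht'le : t' ≤ t' + rr q q' := by linarith
        have hlt' : t' < ε := lt_of_le_of_lt ht'le hlt
        have ht'0 : 0 ≤ t' := h.nonneg hdd0 hrr0
        have ht0 : 0 ≤ t' + rr q q' := by linarith
        rcases ih hlt' with hα | ⟨ω, o, hAnc, ho, hro, hdo⟩
        -- α-state at φ q
        · by_cases hq : q ∈ DY
          · -- tethered-to-x B-point, legal new anchor
            have hAncq : SigAnc φ dd rr DY x q (t' + rr q q') :=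
              SigAnc.stepX (le_trans hα ht'le) hq
            by_cases hq' : q' ∈ DY
            · -- lands on a cluster: must be the same one
              have : q' = q := by
                by_contra hne
                have := sepY q q' hq hq' (by linarith)
                exact hne this.symm
              subst this
              exact Or.inl (le_trans hα (by linarith))
            · exact Or.inr ⟨q, q', hAncq, hq', by linarith, by rw [hddself]; linarith⟩
          · -- at an A-point tethered to x: must be x itself
            by_cases hqx : φ q = x
            · -- start a run from the origin q
              by_cases hq' : q' ∈ DY
              · exact absurd (A4 q q' hqx hq' (fun h => hq (h ▸ hq'))) (by linarith)
              · exact Or.inr ⟨q, q', SigAnc.base hqx ht0, hq', by linarith,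
                  by rw [hddself]; linarith⟩
            · exact absurd (A2 q hq hqx) (by linarith)
        -- γ-state at φ q, with port o and anchor ω
        · by_cases hq : q ∈ DY
          · -- B-point with a port-tether: new anchor at q
            have hAncq : SigAnc φ dd rr DY x q (t' + rr q q') :=
              SigAnc.step (hAnc.mono _ ht'le) (le_trans hro ht'le) ho (le_trans hdo ht'le) hq
            by_cases hq' : q' ∈ DY
            · have : q' = q := by
                by_contra hne
                have := sepY q q' hq hq' (by linarith)
                exact hne this.symm
              subst this
              exact Or.inr ⟨ω, o, hAnc.mono _ ht'le, ho, le_trans hro ht'le,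
                le_trans hdo ht'le⟩
            · exact Or.inr ⟨q, q', hAncq, hq', by linarith, by rw [hddself]; linarith⟩
          · -- A-point: it must be the port itself
            have hoq : o = q := sepX o q ho hq (by linarith)
            subst hoq
            by_cases hq' : q' ∈ DY
            · -- the run lands on a cluster q'
              have hωq' : rr ω q' ≤ t' + rr o q' := le_trans (hrrtri ω o q') (by linarith)
              cases hAnc with
              | base hφω h0 =>
                  by_cases hωD : ω ∈ DY
                  · have : q' = ω := by
                      by_contra hne
                      have := sepY ω q' hωD hq' (by linarith)
                      exact hne this.symm
                    subst this
                    exact Or.inl (by rw [hφω, hddself]; linarith)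
                  · exact absurd (A4 ω q' hφω hq' (fun h => hωD (h ▸ hq'))) (by linarith)
              | stepX hdx hωD =>
                  have : q' = ω := by
                    by_contra hne
                    have := sepY ω q' hωD hq' (by linarith)
                    exact hne this.symm
                  subst this
                  exact Or.inl (le_trans hdx (by linarith))
              | step hAnc2 hro2 ho2 hdo2 hωD =>
                  have : q' = ω := by
                    by_contra hne
                    have := sepY ω q' hωD hq' (by linarith)
                    exact hne this.symm
                  subst this
                  exact Or.inr ⟨_, _, hAnc2.mono _ (by linarith), ho2,
                    le_trans hro2 (by linarith), le_trans hdo2 (by linarith)⟩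
            · exact Or.inr ⟨ω, q', hAnc.mono _ ht'le, hq',
                le_trans (hrrtri ω o q') (by linarith), by rw [hddself]; linarith⟩
  -- extraction at x'
  rcases main x' T hT hcon with hα | ⟨ω, o, hAnc, ho, hro, hdo⟩
  · exact absurd A1 (by linarith)
  · by_cases hox : φ o = x'
    · cases hAnc with
      | base hφω h0 => exact absurd (A6 ω o hφω hox) (by linarith)
      | stepX hdx hωD =>
          by_cases hoω : ω = o
          · subst hoω
            rw [hox] at hdx
            exact absurd A1 (by linarith)
          · exact absurd (A5 o ω hox hωD hoω) (by linarith)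
      | @step ω2 o2 _ _ hAnc2 hro2 ho2 hdo2 hωD =>
          by_cases hoω : ω = o
          · subst hoω
            by_cases ho2x : φ o2 = x'
            · have ho2o : o2 = ω := hinj (ho2x.trans hox.symm)
              exact (ho2o ▸ ho2) hωD
            · rw [hox] at hdo2
              exact absurd (A3 o2 ho2 ho2x) (by linarith)
          · exact absurd (A5 o ω hox hωD hoω) (by linarith)
    · exact absurd (A3 o ho hox) (by linarith)

/-- Package a distance function into a metrizable topology, with a ball criterion. -/
theorem exists_metrizable_of_dist {X : Type*} (D : X → X → ℝ)
    (h0 : ∀ u, D u u = 0) (hc : ∀ u v, D u v = D v u)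
    (ht : ∀ u v w, D u w ≤ D u v + D v w)
    (he : ∀ u v, D u v = 0 → u = v) :
    ∃ τ : TopologicalSpace X, @TopologicalSpace.MetrizableSpace X τ ∧
      ∀ U : Set X, τ.IsOpen U → ∀ z ∈ U, ∃ ε, 0 < ε ∧ ∀ w, D z w < ε → w ∈ U := by
  letI M : MetricSpace X :=
    { dist := D
      dist_self := h0
      dist_comm := hc
      dist_triangle := ht
      eq_of_dist_eq_zero := fun h => he _ _ h }
  refine ⟨M.toUniformSpace.toTopologicalSpace, inferInstance, ?_⟩
  intro U hU z hz
  obtain ⟨ε, hε, hball⟩ := Metric.isOpen_iff.1 hU z hz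
  refine ⟨ε, hε, fun w hw => hball ?_⟩
  have hw2 : D w z < ε := by rw [hc w z]; exact hw
  exact hw2

/-- The topology σ(τ_X, τ_Y, φ): open sets of X whose φ-preimage is open in Y. -/
def sigmaTop {X : Type*} {Y : Type*} (tX : TopologicalSpace X) (tY : TopologicalSpace Y)
    (φ : Y → X) : TopologicalSpace X where
  IsOpen U := tX.IsOpen U ∧ tY.IsOpen (φ ⁻¹' U)
  isOpen_univ := ⟨tX.isOpen_univ, by simpa using tY.isOpen_univ⟩
  isOpen_inter U V hU hV :=
    ⟨tX.isOpen_inter U V hU.1 hV.1, by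
      rw [Set.preimage_inter]
      exact tY.isOpen_inter _ _ hU.2 hV.2⟩
  isOpen_sUnion s hs :=
    ⟨tX.isOpen_sUnion s fun U hU => (hs U hU).1, by
      rw [Set.preimage_sUnion]
      exact @isOpen_biUnion _ _ tY _ _ fun U hU => (hs U hU).2⟩

/-- A set is closed discrete: closed, and its subspace topology is discrete. -/
def ClosedDiscrete {X : Type*} (t : TopologicalSpace X) (D : Set X) : Prop :=
  @IsClosed X t D ∧ @DiscreteTopology D (TopologicalSpace.induced (Subtype.val : D → X) t)

theorem statement8 {X Y : Type*} (tX : TopologicalSpace X) (tY : TopologicalSpace Y)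
    (DX : Set X) (DY : Set Y) (φ : Y → X)
    (hDX : ClosedDiscrete tX DX) (hDY : ClosedDiscrete tY DY)
    (hinj : Function.Injective φ)
    (himg : φ '' DYᶜ = DX)
    (hdense : @Dense X tX (Set.range φ))
    (hmX : @TopologicalSpace.MetrizableSpace X tX)
    (hmY : @TopologicalSpace.MetrizableSpace Y tY) :
    ∃ τ : TopologicalSpace X, @TopologicalSpace.MetrizableSpace X τ ∧
      ∀ U : Set X, τ.IsOpen U → (sigmaTop tX tY φ).IsOpen U := by
  classical
  letI := tX
  letI := tY
  haveI := hmX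
  haveI := hmY
  letI mX : MetricSpace X := TopologicalSpace.metrizableSpaceMetric X
  letI mY : MetricSpace Y := TopologicalSpace.metrizableSpaceMetric Y
  have hDXc : IsClosed DX := hDX.1
  have hDYc : IsClosed DY := hDY.1
  have hdsX : ∀ a ∈ DX, ∃ ε, 0 < ε ∧ ∀ b ∈ DX, b ≠ a → ε ≤ dist a b :=
    discrete_sep hDX.2
  have hdsY : ∀ a ∈ DY, ∃ ε, 0 < ε ∧ ∀ b ∈ DY, b ≠ a → ε ≤ dist a b :=
    discrete_sep hDY.2
  obtain ⟨dd, hdd_ge, hdd_self, hdd_comm, hdd_tri, hdd_sep, hdd_loc⟩ :=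
    exists_good_dist hDXc hdsX
  obtain ⟨rr, hrr_ge, hrr_self, hrr_comm, hrr_tri, hrr_sep, hrr_loc⟩ :=
    exists_good_dist hDYc hdsY
  have hdd0 : ∀ u v, 0 ≤ dd u v := fun u v => le_trans dist_nonneg (hdd_ge u v)
  have hrr0 : ∀ q q', 0 ≤ rr q q' := fun q q' => le_trans dist_nonneg (hrr_ge q q')
  have hφDX : ∀ o, o ∉ DY → φ o ∈ DX := fun o ho => himg ▸ ⟨o, ho, rfl⟩
  have sepX : ∀ o o', o ∉ DY → o' ∉ DY → dd (φ o) (φ o') < 1 → o = o' := by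
    intro o o' ho ho' hlt
    by_contra hne
    have hφne : φ o ≠ φ o' := fun h => hne (hinj h)
    exact absurd (hdd_sep _ _ (hφDX o ho) (hφDX o' ho') hφne) (by linarith)
  have sepY : ∀ w w', w ∈ DY → w' ∈ DY → rr w w' < 1 → w = w' := by
    intro w w' hw hw' hlt
    by_contra hne
    exact absurd (hrr_sep _ _ hw hw' hne) (by linarith)
  -- the chain distance
  set D : X → X → ℝ := fun u v => sInf {t | SigReach φ dd rr u v t} with hDdef
  have hmemD : ∀ u v, (0 + dd u v) ∈ {t | SigReach φ dd rr u v t} :=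
    fun u v => SigReach.stepd v SigReach.refl
  have hne : ∀ u v : X, {t | SigReach φ dd rr u v t}.Nonempty :=
    fun u v => ⟨0 + dd u v, hmemD u v⟩
  have hbdd : ∀ u v : X, BddBelow {t | SigReach φ dd rr u v t} :=
    fun u v => ⟨0, fun t ht => SigReach.nonneg hdd0 hrr0 ht⟩
  have hD_le_dd : ∀ u v, D u v ≤ dd u v := by
    intro u v
    have h2 := csInf_le (hbdd u v) (hmemD u v)
    rwa [zero_add] at h2
  have hD_le_rr : ∀ q q', D (φ q) (φ q') ≤ rr q q' := by
    intro q q'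
    have hmem : (0 + rr q q') ∈ {t | SigReach φ dd rr (φ q) (φ q') t} :=
      SigReach.stepr q q' SigReach.refl
    have h2 := csInf_le (hbdd _ _) hmem
    rwa [zero_add] at h2
  have hD_nonneg : ∀ u v, 0 ≤ D u v := fun u v =>
    le_csInf (hne u v) (fun t ht => SigReach.nonneg hdd0 hrr0 ht)
  have hD_self : ∀ u, D u u = 0 := by
    intro u
    refine le_antisymm ?_ (hD_nonneg u u)
    exact csInf_le (hbdd u u) (SigReach.refl : SigReach φ dd rr u u 0)
  have hD_comm : ∀ u v, D u v = D v u := by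
    intro u v
    have hset : {t | SigReach φ dd rr u v t} = {t | SigReach φ dd rr v u t} := by
      ext t
      exact ⟨fun h => h.symm hdd_comm hrr_comm, fun h => h.symm hdd_comm hrr_comm⟩
    show sInf _ = sInf _
    rw [hset]
  have hD_tri : ∀ u v w, D u w ≤ D u v + D v w := by
    intro u v w
    refine le_of_forall_pos_le_add ?_
    intro ε hε
    have h1 : D u v < D u v + ε / 2 := by linarith
    have h2 : D v w < D v w + ε / 2 := by linarith
    obtain ⟨t1, ht1m, ht1⟩ := (csInf_lt_iff (hbdd u v) (hne u v)).1 h1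
    obtain ⟨t2, ht2m, ht2⟩ := (csInf_lt_iff (hbdd v w) (hne v w)).1 h2
    have hcat : SigReach φ dd rr u w (t1 + t2) := SigReach.append ht1m ht2m
    have := csInf_le (hbdd u w) hcat
    calc D u w ≤ t1 + t2 := this
      _ ≤ (D u v + ε / 2) + (D v w + ε / 2) := by linarith
      _ = D u v + D v w + ε := by ring
  -- positivity
  have hD_pos : ∀ u v : X, u ≠ v → 0 < D u v := by
    intro u v huv
    -- the six constants
    have hc1 : 0 < dd u v := lt_of_lt_of_le (dist_pos.2 huv) (hdd_ge u v)
    obtain ⟨c2, hc2p, hc2⟩ : ∃ c, 0 < c ∧ ∀ o, o ∉ DY → φ o ≠ u → c ≤ dd u (φ o) := by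
      by_cases hu : u ∈ DX
      · exact ⟨1, one_pos, fun o ho hne => hdd_sep u (φ o) hu (hφDX o ho) (Ne.symm hne)⟩
      · obtain ⟨ε, hε, hsep⟩ := closed_sep hDXc u hu
        exact ⟨ε, hε, fun o ho _ => le_trans (hsep _ (hφDX o ho)) (hdd_ge _ _)⟩
    obtain ⟨c3, hc3p, hc3⟩ : ∃ c, 0 < c ∧ ∀ o, o ∉ DY → φ o ≠ v → c ≤ dd (φ o) v := by
      by_cases hv : v ∈ DX
      · exact ⟨1, one_pos, fun o ho hne => hdd_sep (φ o) v (hφDX o ho) hv hne⟩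
      · obtain ⟨ε, hε, hsep⟩ := closed_sep hDXc v hv
        refine ⟨ε, hε, fun o ho _ => ?_⟩
        calc ε ≤ dist v (φ o) := hsep _ (hφDX o ho)
          _ = dist (φ o) v := dist_comm _ _
          _ ≤ dd (φ o) v := hdd_ge _ _
    obtain ⟨c4, hc4p, hc4⟩ : ∃ c, 0 < c ∧ ∀ q w, φ q = u → w ∈ DY → w ≠ q → c ≤ rr q w := by
      by_cases hu : ∃ q0, φ q0 = u
      · obtain ⟨q0, hq0⟩ := hu
        have huniq : ∀ q, φ q = u → q = q0 := fun q hq => hinj (hq.trans hq0.symm)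
        by_cases hq0D : q0 ∈ DY
        · refine ⟨1, one_pos, fun q w hq hw hne => ?_⟩
          rw [huniq q hq] at hne ⊢
          exact hrr_sep q0 w hq0D hw (Ne.symm hne)
        · obtain ⟨ε, hε, hsep⟩ := closed_sep hDYc q0 hq0D
          refine ⟨ε, hε, fun q w hq hw _ => ?_⟩
          rw [huniq q hq]
          exact le_trans (hsep w hw) (hrr_ge q0 w)
      · exact ⟨1, one_pos, fun q w hq _ _ => absurd ⟨q, hq⟩ hu⟩
    obtain ⟨c5, hc5p, hc5⟩ : ∃ c, 0 < c ∧ ∀ q w, φ q = v → w ∈ DY → w ≠ q → c ≤ rr w q := by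
      by_cases hv : ∃ q1, φ q1 = v
      · obtain ⟨q1, hq1⟩ := hv
        have huniq : ∀ q, φ q = v → q = q1 := fun q hq => hinj (hq.trans hq1.symm)
        by_cases hq1D : q1 ∈ DY
        · refine ⟨1, one_pos, fun q w hq hw hne => ?_⟩
          rw [huniq q hq] at hne ⊢
          exact hrr_sep w q1 hw hq1D hne
        · obtain ⟨ε, hε, hsep⟩ := closed_sep hDYc q1 hq1D
          refine ⟨ε, hε, fun q w hq hw _ => ?_⟩
          rw [huniq q hq]
          calc ε ≤ dist q1 w := hsep w hw
            _ = dist w q1 := dist_comm _ _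
            _ ≤ rr w q1 := hrr_ge _ _
      · exact ⟨1, one_pos, fun q w hq _ _ => absurd ⟨q, hq⟩ hv⟩
    obtain ⟨c6, hc6p, hc6⟩ : ∃ c, 0 < c ∧ ∀ q q', φ q = u → φ q' = v → c ≤ rr q q' := by
      by_cases hu : ∃ q0, φ q0 = u
      · obtain ⟨q0, hq0⟩ := hu
        by_cases hv : ∃ q1, φ q1 = v
        · obtain ⟨q1, hq1⟩ := hv
          have hq01 : q0 ≠ q1 := by
            intro h
            exact huv (by rw [← hq0, ← hq1, h])
          refine ⟨dist q0 q1, dist_pos.2 hq01, fun q q' hq hq' => ?_⟩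
          have h1 : q = q0 := hinj (hq.trans hq0.symm)
          have h2 : q' = q1 := hinj (hq'.trans hq1.symm)
          rw [h1, h2]
          exact hrr_ge q0 q1
        · exact ⟨1, one_pos, fun q q' _ hq' => absurd ⟨q', hq'⟩ hv⟩
      · exact ⟨1, one_pos, fun q q' hq _ => absurd ⟨q, hq⟩ hu⟩
    set ε := min 1 (min (dd u v) (min c2 (min c3 (min c4 (min c5 c6))))) with hεdef
    have hεp : 0 < ε := by
      apply lt_min one_pos
      apply lt_min hc1
      apply lt_min hc2p
      apply lt_min hc3p
      apply lt_min hc4p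
      exact lt_min hc5p hc6p
    have hεle : ∀ t, SigReach φ dd rr u v t → ε ≤ t := by
      apply sigReach_lower φ dd rr DY hinj hdd0 hdd_self hdd_tri hrr0 hrr_tri sepX sepY u v ε
        (min_le_left _ _)
      · exact le_trans (le_trans (min_le_right _ _) (min_le_left _ _)) le_rfl
      · intro o ho hne
        exact le_trans (le_trans (min_le_right _ _)
          (le_trans (min_le_right _ _) (min_le_left _ _))) (hc2 o ho hne)
      · intro o ho hne
        exact le_trans (le_trans (min_le_right _ _) (le_trans (min_le_right _ _)
          (le_trans (min_le_right _ _) (min_le_left _ _)))) (hc3 o ho hne)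
      · intro q w hq hw hne
        exact le_trans (le_trans (min_le_right _ _) (le_trans (min_le_right _ _)
          (le_trans (min_le_right _ _) (le_trans (min_le_right _ _) (min_le_left _ _)))))
          (hc4 q w hq hw hne)
      · intro q w hq hw hne
        exact le_trans (le_trans (min_le_right _ _) (le_trans (min_le_right _ _)
          (le_trans (min_le_right _ _) (le_trans (min_le_right _ _)
          (le_trans (min_le_right _ _) (min_le_left _ _)))))) (hc5 q w hq hw hne)
      · intro q q' hq hq'
        exact le_trans (le_trans (min_le_right _ _) (le_trans (min_le_right _ _)
          (le_trans (min_le_right _ _) (le_trans (min_le_right _ _)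
          (le_trans (min_le_right _ _) (min_le_right _ _)))))) (hc6 q q' hq hq')
    have := le_csInf (hne u v) hεle
    exact lt_of_lt_of_le hεp this
  -- build the metric space
  obtain ⟨τ, hmet, hopen⟩ := exists_metrizable_of_dist D hD_self hD_comm hD_tri
    (fun u v h => by
      by_contra hab
      exact absurd h (ne_of_gt (hD_pos u v hab)))
  refine ⟨τ, hmet, ?_⟩
  intro U hU
  constructor
  · -- tX-open
    show tX.IsOpen U
    refine (@Metric.isOpen_iff X mX.toPseudoMetricSpace U).2 ?_
    intro z hz
    obtain ⟨ε, hε, hball⟩ := hopen U hU z hz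
    obtain ⟨δ0, hδ0, C, hC, hloc⟩ := hdd_loc z
    refine ⟨min δ0 (ε / (C + 1)), lt_min hδ0 (by positivity), ?_⟩
    intro w hw
    have hw0 : dist w z < min δ0 (ε / (C + 1)) := hw
    have hw1 : dist z w < δ0 := by
      rw [dist_comm]
      exact lt_of_lt_of_le hw0 (min_le_left _ _)
    have hw2 : dist z w < ε / (C + 1) := by
      rw [dist_comm]
      exact lt_of_lt_of_le hw0 (min_le_right _ _)
    have h1 : dd z w ≤ C * dist z w := hloc w hw1
    have h2 : D z w ≤ dd z w := hD_le_dd z w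
    have h3 : C * dist z w ≤ (C + 1) * dist z w := by
      nlinarith [dist_nonneg (x := z) (y := w)]
    have h4 : (C + 1) * dist z w < (C + 1) * (ε / (C + 1)) :=
      mul_lt_mul_of_pos_left hw2 (by positivity)
    have h5 : (C + 1) * (ε / (C + 1)) = ε := by field_simp
    exact hball w (by linarith)
  · -- tY-open
    show tY.IsOpen (φ ⁻¹' U)
    refine (@Metric.isOpen_iff Y mY.toPseudoMetricSpace (φ ⁻¹' U)).2 ?_
    intro q hq
    obtain ⟨ε, hε, hball⟩ := hopen U hU (φ q) hq
    obtain ⟨δ0, hδ0, C, hC, hloc⟩ := hrr_loc q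
    refine ⟨min δ0 (ε / (C + 1)), lt_min hδ0 (by positivity), ?_⟩
    intro q' hq'
    have hw0 : dist q' q < min δ0 (ε / (C + 1)) := hq'
    have hw1 : dist q q' < δ0 := by
      rw [dist_comm]
      exact lt_of_lt_of_le hw0 (min_le_left _ _)
    have hw2 : dist q q' < ε / (C + 1) := by
      rw [dist_comm]
      exact lt_of_lt_of_le hw0 (min_le_right _ _)
    have h1 : rr q q' ≤ C * dist q q' := hloc q' hw1
    have h2 : D (φ q) (φ q') ≤ rr q q' := hD_le_rr q q'
    have h3 : C * dist q q' ≤ (C + 1) * dist q q' := by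
      nlinarith [dist_nonneg (x := q) (y := q')]
    have h4 : (C + 1) * dist q q' < (C + 1) * (ε / (C + 1)) :=
      mul_lt_mul_of_pos_left hw2 (by positivity)
    have h5 : (C + 1) * (ε / (C + 1)) = ε := by field_simp
    exact hball (φ q') (by linarith)
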